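/- In R^3, let A and B be distinct points and fix α ∈ (0, π/2) and β ∈ (0, π). Let S₁ = {C : ∠CBA = α} (a cone with vertex B and axis line AB) and S₂ = {C : ∠ACB = β, C ∉ line AB} (a surface of revolution about line AB). Then S₁ ∩ S₂ is contained in a single circle lying in a plane perpendicular to line AB. -/

import Mathlib

open EuclideanGeometry Real
open scoped RealInnerProductSpace

theorem stmt_6 (A B : EuclideanSpace ℝ (Fin 3)) (hAB : A ≠ B)
    (α : ℝ) (hα : α ∈ Set.Ioo 0 (π / 2)) (β : ℝ) (hβ : β ∈ Set.Ioo 0 π)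
    (S₁ S₂ : Set (EuclideanSpace ℝ (Fin 3)))
    (hS₁ : S₁ = {C | ∠ C B A = α})
    (hS₂ : S₂ = {C | ∠ A C B = β ∧ C ∉ line[ℝ, A, B]}) :
    ∃ (c : EuclideanSpace ℝ (Fin 3)) (r : ℝ),
      S₁ ∩ S₂ ⊆ Metric.sphere c r ∩ {X | inner ℝ (X - c) (B - A) = (0 : ℝ)} := by
  obtain ⟨hα0, hα2⟩ := hα
  obtain ⟨hβ0, hβπ⟩ := hβ
  have hsinβ : 0 < Real.sin β := Real.sin_pos_of_pos_of_lt_pi hβ0 hβπ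
  have hsinα : 0 < Real.sin α := Real.sin_pos_of_pos_of_lt_pi hα0 (lt_trans hα2 (by linarith [Real.pi_pos]))
  set w : EuclideanSpace ℝ (Fin 3) := A - B with hw
  have hwne : w ≠ 0 := sub_ne_zero.mpr hAB
  set d : ℝ := ‖w‖ with hd
  have hdpos : 0 < d := norm_pos_iff.mpr hwne
  set L : ℝ := d * Real.sin (α + β) / Real.sin β with hL
  refine ⟨B + ((L * Real.cos α) / d) • w, L * Real.sin α, ?_⟩
  rintro C ⟨hC1, hC2⟩
  rw [hS₁] at hC1; rw [hS₂] at hC2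
  obtain ⟨hCβ, hCline⟩ := hC2
  have hCA : C ≠ A := fun h => hCline (h ▸ left_mem_affineSpan_pair ℝ A B)
  have hCB : C ≠ B := fun h => hCline (h ▸ right_mem_affineSpan_pair ℝ A B)
  set v : EuclideanSpace ℝ (Fin 3) := C - B with hv
  have hvne : v ≠ 0 := sub_ne_zero.mpr hCB
  have hwv : w - v = A - C := by rw [hw, hv]; abel
  have hwvne : w - v ≠ 0 := by rw [hwv]; exact sub_ne_zero.mpr hCA.symm
  have hvpos : 0 < ‖v‖ := norm_pos_iff.mpr hvne
  have hwvpos : 0 < ‖w - v‖ := norm_pos_iff.mpr hwvne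
  -- First angle: ∠ C B A = α
  have hA1 : InnerProductGeometry.angle v w = α := by
    rw [← hC1]; simp [EuclideanGeometry.angle, vsub_eq_sub, ← hv, ← hw]
  have h1 : ⟪v, w⟫ = ‖v‖ * (d * Real.cos α) := by
    have h := InnerProductGeometry.cos_angle v w
    rw [hA1] at h
    have hne : ‖v‖ * ‖w‖ ≠ 0 := by positivity
    rw [eq_div_iff hne] at h
    rw [← h, hd]; ring
  -- Second angle: ∠ A C B = β
  have hA2 : InnerProductGeometry.angle (w - v) (-v) = β := by
    rw [← hCβ]
    simp only [EuclideanGeometry.angle, vsub_eq_sub]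
    rw [hwv]
    congr 1
    rw [hv]; abel
  have h2 : ‖w - v‖ * ‖v‖ * Real.cos β = ‖v‖ ^ 2 - ⟪v, w⟫ := by
    have := InnerProductGeometry.cos_angle (w - v) (-v)
    rw [hA2, norm_neg] at this
    have hinner : ⟪w - v, -v⟫ = ‖v‖ ^ 2 - ⟪v, w⟫ := by
      rw [inner_neg_right, inner_sub_left, real_inner_self_eq_norm_sq,
        real_inner_comm]
      ring
    rw [hinner] at this
    have hne : ‖w - v‖ * ‖v‖ ≠ 0 := by positivity
    rw [eq_div_iff hne] at this
    linear_combination this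
  have hnwv : ‖w - v‖ ^ 2 = ‖v‖ ^ 2 - 2 * ⟪v, w⟫ + d ^ 2 := by
    have := norm_sub_sq_real w v
    rw [real_inner_comm] at this
    rw [this, hd]; ring
  -- law of sines: ‖w - v‖ * sin β = d * sin α
  have hsq : (‖w - v‖ * Real.sin β) ^ 2 = (d * Real.sin α) ^ 2 := by
    have hc2 : Real.sin β ^ 2 = 1 - Real.cos β ^ 2 := by
      have := Real.sin_sq_add_cos_sq β; linarith
    have hc3 : Real.sin α ^ 2 = 1 - Real.cos α ^ 2 := by
      have := Real.sin_sq_add_cos_sq α; linarith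
    have key : (‖w - v‖ * Real.sin β * ‖v‖) ^ 2 = (d * Real.sin α * ‖v‖) ^ 2 := by
      have expand : (‖w - v‖ * Real.sin β * ‖v‖) ^ 2
          = ‖w - v‖ ^ 2 * ‖v‖ ^ 2 - (‖w - v‖ * ‖v‖ * Real.cos β) ^ 2 := by
        linear_combination (‖w - v‖ * ‖v‖) ^ 2 * hc2
      rw [expand, h2, hnwv, h1]
      linear_combination (-(d * ‖v‖) ^ 2) * hc3
    have hv2 : (‖v‖ ^ 2) ≠ 0 := pow_ne_zero 2 (ne_of_gt hvpos)
    have key' : (‖w - v‖ * Real.sin β) ^ 2 * ‖v‖ ^ 2 = (d * Real.sin α) ^ 2 * ‖v‖ ^ 2 := by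
      linear_combination key
    exact mul_right_cancel₀ hv2 key'
  have h4 : ‖w - v‖ * Real.sin β = d * Real.sin α := by
    have hx : 0 ≤ ‖w - v‖ * Real.sin β := (mul_pos hwvpos hsinβ).le
    have hy : 0 ≤ d * Real.sin α := (mul_pos hdpos hsinα).le
    calc ‖w - v‖ * Real.sin β = Real.sqrt ((‖w - v‖ * Real.sin β) ^ 2) :=
          (Real.sqrt_sq hx).symm
      _ = Real.sqrt ((d * Real.sin α) ^ 2) := by rw [hsq]
      _ = d * Real.sin α := Real.sqrt_sq hy
  -- determine ‖v‖
  have h5 : ‖v‖ = L := by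
    have hstep : ‖w - v‖ * Real.cos β = ‖v‖ - d * Real.cos α := by
      have h' : (‖w - v‖ * Real.cos β) * ‖v‖ = (‖v‖ - d * Real.cos α) * ‖v‖ := by
        linear_combination h2 - h1
      exact mul_right_cancel₀ (ne_of_gt hvpos) h'
    have hmul : ‖v‖ * Real.sin β = d * Real.sin (α + β) := by
      have hth := congrArg (· * Real.sin β) hstep
      rw [Real.sin_add]
      linear_combination -hth + Real.cos β * h4
    rw [hL, eq_div_iff (ne_of_gt hsinβ)]
    linarith [hmul]
  have hvw : ⟪v, w⟫ = L * (d * Real.cos α) := by rw [h1, h5]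
  clear_value w d L v
  constructor
  · -- sphere membership
    rw [Metric.mem_sphere, dist_eq_norm]
    have hdiff : C - (B + ((L * Real.cos α) / d) • w) = v - ((L * Real.cos α) / d) • w := by
      rw [hv]; abel
    rw [hdiff]
    have hLnn : 0 ≤ L := h5 ▸ norm_nonneg v
    have hd' : d ≠ 0 := ne_of_gt hdpos
    have hsw : ‖((L * Real.cos α) / d) • w‖ ^ 2 = ((L * Real.cos α) / d) ^ 2 * d ^ 2 := by
      rw [norm_smul, mul_pow, Real.norm_eq_abs, sq_abs, ← hd]
    have h5' : ‖v‖ ^ 2 = L ^ 2 := by rw [h5]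
    have hsc : Real.sin α ^ 2 = 1 - Real.cos α ^ 2 := by
      have := Real.sin_sq_add_cos_sq α; linarith
    have hdd : ((L * Real.cos α) / d) * d = L * Real.cos α := div_mul_cancel₀ _ hd'
    have hsq2 : ‖v - ((L * Real.cos α) / d) • w‖ ^ 2 = (L * Real.sin α) ^ 2 := by
      have hns := norm_sub_sq_real v (((L * Real.cos α) / d) • w)
      rw [real_inner_smul_right, hvw, hsw, h5'] at hns
      rw [hns]
      linear_combination (((L * Real.cos α) / d) * d - L * Real.cos α) * hdd - L ^ 2 * hsc
    have hr : 0 ≤ L * Real.sin α := mul_nonneg hLnn hsinα.le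
    calc ‖v - ((L * Real.cos α) / d) • w‖
        = Real.sqrt (‖v - ((L * Real.cos α) / d) • w‖ ^ 2) :=
          (Real.sqrt_sq (norm_nonneg _)).symm
      _ = Real.sqrt ((L * Real.sin α) ^ 2) := by rw [hsq2]
      _ = L * Real.sin α := Real.sqrt_sq hr
  · -- perpendicularity
    show ⟪C - (B + ((L * Real.cos α) / d) • w), B - A⟫ = 0
    have hdiff : C - (B + ((L * Real.cos α) / d) • w) = v - ((L * Real.cos α) / d) • w := by
      rw [hv]; abel
    have hBA : B - A = -w := by rw [hw]; abel
    rw [hdiff, hBA, inner_neg_right, inner_sub_left, real_inner_smul_left, hvw,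
      real_inner_self_eq_norm_sq, ← hd]
    have hd' : d ≠ 0 := ne_of_gt hdpos
    field_simp
    ring
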